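/- For any (u0,...,u4) ∈ ℂ^5 with u_j = u_k for some j ≠ k, and any m, n ≥ 0, the sum T_{mn}(U) = Σ_{i=0}^4 M_i(U) u_i^m l_i(U)^n vanishes whenever l is a symmetric-compatible assignment with l_j = l_k when u_j = u_k; in particular, T_{mn}(U) is divisible by the discriminant δ(U) = ∏_{j>k}(u_j - u_k) in ℚ[u0,...,u4] when l_i is a polynomial in the u's satisfying l_j|_{u_j=u_k} = l_k|_{u_j=u_k}. Concretely, for l_i = S_{80} u_i^5 - S_{90} u_i^4 (with S_{m0} defined below), each T_{mn} is divisible by δ. -/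

import Mathlib

open MvPolynomial

/-- Elementary symmetric polynomial (degree `m`) in the variables indexed by `s`. -/
noncomputable def esymP (s : Finset (Fin 5)) (m : ℕ) : MvPolynomial (Fin 5) ℚ :=
  ∑ t ∈ s.powersetCard m, ∏ j ∈ t, X j

/-- `d_i = ∏_{j>k, j,k≠i} (u_j - u_k)`. -/
noncomputable def dP (i : Fin 5) : MvPolynomial (Fin 5) ℚ :=
  ∏ p ∈ Finset.univ.filter
      (fun p : Fin 5 × Fin 5 => p.2 < p.1 ∧ p.1 ≠ i ∧ p.2 ≠ i), (X p.1 - X p.2)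

/-- `n_i = e₂(i)² - e₁(i)e₃(i)`. -/
noncomputable def nP (i : Fin 5) : MvPolynomial (Fin 5) ℚ :=
  (esymP {i}ᶜ 2)^2 - esymP {i}ᶜ 1 * esymP {i}ᶜ 3

/-- `M_i = (-1)^i d_i n_i`. -/
noncomputable def MP (i : Fin 5) : MvPolynomial (Fin 5) ℚ :=
  (-1)^(i : ℕ) * dP i * nP i

/-- The discriminant `δ = ∏_{j>k} (u_j - u_k)`. -/
noncomputable def deltaP : MvPolynomial (Fin 5) ℚ :=
  ∏ p ∈ Finset.univ.filter (fun p : Fin 5 × Fin 5 => p.2 < p.1), (X p.1 - X p.2)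

/-! ### Auxiliary machinery: the substitution `u_j := u_k` -/

/-- The substitution homomorphism sending `X j` to `X k` and fixing all other variables. -/
noncomputable def sb (j k : Fin 5) : MvPolynomial (Fin 5) ℚ →ₐ[ℚ] MvPolynomial (Fin 5) ℚ :=
  aeval (fun i => if i = j then X k else X i)

lemma sb_X (j k i : Fin 5) : sb j k (X i) = if i = j then X k else X i := aeval_X _ _

lemma dvd_sub_sb (j k : Fin 5) (P : MvPolynomial (Fin 5) ℚ) :
    (X j - X k) ∣ P - sb j k P := by
  induction P using MvPolynomial.induction_on with
  | C a => simp [sb]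
  | add p q hp hq =>
      have := dvd_add hp hq
      rw [map_add]
      convert this using 1; ring
  | mul_X p i hp =>
      rw [map_mul, sb_X]
      by_cases h : i = j
      · rw [if_pos h, h]
        have h2 : p * X j - sb j k p * X k
            = (p - sb j k p) * X j + sb j k p * (X j - X k) := by ring
        rw [h2]
        exact dvd_add (hp.mul_right _) (dvd_mul_left _ _)
      · rw [if_neg h]
        have h2 : p * X i - sb j k p * X i = (p - sb j k p) * X i := by ring
        rw [h2]
        exact hp.mul_right _

lemma sb_XsubX (j k : Fin 5) (h : j ≠ k) : sb j k (X j - X k) = 0 := by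
  rw [map_sub, sb_X, sb_X, if_pos rfl, if_neg (Ne.symm h), sub_self]

lemma dvd_of_sb_eq_zero {j k : Fin 5} {P : MvPolynomial (Fin 5) ℚ} (h0 : sb j k P = 0) :
    (X j - X k) ∣ P := by
  have := dvd_sub_sb j k P
  rwa [h0, sub_zero] at this

lemma sb_eq_zero_of_dvd {j k : Fin 5} (h : j ≠ k) {P : MvPolynomial (Fin 5) ℚ}
    (hd : (X j - X k) ∣ P) : sb j k P = 0 := by
  obtain ⟨c, rfl⟩ := hd
  rw [map_mul, sb_XsubX j k h, zero_mul]

lemma prime_XsubX {j k : Fin 5} (h : j ≠ k) : Prime (X j - X k : MvPolynomial (Fin 5) ℚ) := by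
  refine ⟨?_, ?_, ?_⟩
  · intro h0
    rw [sub_eq_zero] at h0
    exact h (X_injective h0)
  · intro hu
    have : sb j k 1 = 0 := sb_eq_zero_of_dvd h hu.dvd
    simp at this
  · intro a b hab
    have : sb j k a * sb j k b = 0 := by
      rw [← map_mul]; exact sb_eq_zero_of_dvd h hab
    rcases mul_eq_zero.mp this with h1 | h1
    · exact Or.inl (dvd_of_sb_eq_zero h1)
    · exact Or.inr (dvd_of_sb_eq_zero h1)

lemma not_dvd_pairs {p q : Fin 5 × Fin 5} (hp : p.2 < p.1) (hq : q.2 < q.1) (hne : p ≠ q) :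
    ¬ (X p.1 - X p.2 : MvPolynomial (Fin 5) ℚ) ∣ (X q.1 - X q.2) := by
  intro h
  have h0 := sb_eq_zero_of_dvd (ne_of_gt hp) h
  rw [map_sub, sb_X, sb_X] at h0
  split_ifs at h0 with h1 h2 h2
  · exact absurd (h1.trans h2.symm) (ne_of_gt hq)
  · rw [sub_eq_zero] at h0
    have := X_injective h0
    exact hne.symm (Prod.ext h1 this.symm)
  · rw [sub_eq_zero] at h0
    have hq1 : q.1 = p.2 := X_injective h0
    rw [h2] at hq
    exact absurd hq1 (ne_of_gt (lt_trans hp hq))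
  · rw [sub_eq_zero] at h0
    exact absurd (X_injective h0) (ne_of_gt hq)

set_option linter.unnecessarySimpa false in
lemma prod_dvd_aux {ι : Type*} {α : Type*} [CommMonoidWithZero α]
    (s : Finset ι) (f : ι → α) (n : α)
    (hp : ∀ i ∈ s, Prime (f i)) (hnd : ∀ i ∈ s, ∀ j ∈ s, i ≠ j → ¬ f i ∣ f j)
    (h : ∀ i ∈ s, f i ∣ n) : (∏ i ∈ s, f i) ∣ n := by
  induction s using Finset.cons_induction generalizing n with
  | empty => simpa using one_dvd n
  | cons a s ha ih =>
      obtain ⟨m, rfl⟩ := h a (Finset.mem_cons_self a s)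
      rw [Finset.prod_cons]
      have hm : ∀ i ∈ s, f i ∣ m := by
        intro i hi
        have hia : i ≠ a := fun he => ha (he ▸ hi)
        have hpi := hp i (Finset.mem_cons_of_mem hi)
        rcases hpi.2.2 _ _ (h i (Finset.mem_cons_of_mem hi)) with h' | h'
        · exact absurd h' (hnd i (Finset.mem_cons_of_mem hi) a (Finset.mem_cons_self a s) hia)
        · exact h'
      exact mul_dvd_mul_left (f a)
        (ih m (fun i hi => hp i (Finset.mem_cons_of_mem hi))
          (fun i hi j hj hij => hnd i (Finset.mem_cons_of_mem hi) j (Finset.mem_cons_of_mem hj) hij)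
          hm)

/-! ### Behaviour of `M_i` under the substitution `u_j := u_k` -/

lemma sb_esymP {j k : Fin 5} (hjk : j ≠ k) (m : ℕ) :
    sb j k (esymP {j}ᶜ m) = sb j k (esymP {k}ᶜ m) := by
  set g : Fin 5 → MvPolynomial (Fin 5) ℚ := fun i => if i = j then X k else X i with hg
  have hgs : ∀ a, g (Equiv.swap j k a) = g a := by
    intro a
    rcases eq_or_ne a j with rfl | haj
    · simp [Equiv.swap_apply_left, hg, hjk, Ne.symm hjk]
    · rcases eq_or_ne a k with rfl | hak
      · simp [Equiv.swap_apply_right, hg, hjk, Ne.symm hjk]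
      · rw [Equiv.swap_apply_of_ne_of_ne haj hak]
  have hmap : ∀ P, sb j k P = aeval g P := fun P => rfl
  rw [hmap, hmap, esymP, esymP, map_sum, map_sum]
  refine Finset.sum_bij' (fun t _ => t.map (Equiv.swap j k).toEmbedding)
    (fun t _ => t.map (Equiv.swap j k).toEmbedding) ?_ ?_ ?_ ?_ ?_
  · intro t ht
    rw [Finset.mem_powersetCard] at ht ⊢
    refine ⟨?_, by rw [Finset.card_map]; exact ht.2⟩
    intro a ha
    rw [Finset.mem_map] at ha
    obtain ⟨b, hb, rfl⟩ := ha
    have hbj : b ≠ j := by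
      have := ht.1 hb; simpa using this
    simp only [Finset.mem_compl, Finset.mem_singleton, Equiv.coe_toEmbedding]
    intro hbk
    rw [Equiv.swap_apply_eq_iff, Equiv.swap_apply_right] at hbk
    exact hbj hbk
  · intro t ht
    rw [Finset.mem_powersetCard] at ht ⊢
    refine ⟨?_, by rw [Finset.card_map]; exact ht.2⟩
    intro a ha
    rw [Finset.mem_map] at ha
    obtain ⟨b, hb, rfl⟩ := ha
    have hbk : b ≠ k := by
      have := ht.1 hb; simpa using this
    simp only [Finset.mem_compl, Finset.mem_singleton, Equiv.coe_toEmbedding]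
    intro hbj
    rw [Equiv.swap_apply_eq_iff, Equiv.swap_apply_left] at hbj
    exact hbk hbj
  · intro t ht
    rw [Finset.map_map]
    have he : (Equiv.swap j k).toEmbedding.trans (Equiv.swap j k).toEmbedding
        = Function.Embedding.refl (Fin 5) := by
      ext a
      simp [Equiv.swap_apply_self]
    rw [he, Finset.map_refl]
  · intro t ht
    rw [Finset.map_map]
    have he : (Equiv.swap j k).toEmbedding.trans (Equiv.swap j k).toEmbedding
        = Function.Embedding.refl (Fin 5) := by
      ext a
      simp [Equiv.swap_apply_self]
    rw [he, Finset.map_refl]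
  · intro t ht
    rw [map_prod, map_prod, Finset.prod_map]
    refine Finset.prod_congr rfl fun a _ => ?_
    rw [aeval_X, aeval_X, Equiv.coe_toEmbedding, hgs]

lemma dP_expand (i : Fin 5) : dP i
    = ∏ a : Fin 5, ∏ b : Fin 5, (if b < a ∧ a ≠ i ∧ b ≠ i then X a - X b else 1) := by
  rw [dP, Finset.prod_filter, Fintype.prod_prod_type]

lemma fmk0 (h : 0 < 5) : (⟨0, h⟩ : Fin 5) = 0 := rfl
lemma fmk1 (h : 1 < 5) : (⟨1, h⟩ : Fin 5) = 1 := rfl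
lemma fmk2 (h : 2 < 5) : (⟨2, h⟩ : Fin 5) = 2 := rfl
lemma fmk3 (h : 3 < 5) : (⟨3, h⟩ : Fin 5) = 3 := rfl
lemma fmk4 (h : 4 < 5) : (⟨4, h⟩ : Fin 5) = 4 := rfl

set_option maxHeartbeats 2000000 in
lemma sb_dP_sign {j k : Fin 5} (hjk : k < j) :
    ((-1 : MvPolynomial (Fin 5) ℚ))^(j:ℕ) * sb j k (dP j)
      = -(((-1 : MvPolynomial (Fin 5) ℚ))^(k:ℕ) * sb j k (dP k)) := by
  fin_cases j <;> fin_cases k <;>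
    first
      | exact absurd hjk (by decide)
      | (simp (config := { decide := true }) only [dP_expand, Fin.prod_univ_five,
           ite_true, ite_false, map_mul, map_sub, map_one, sb_X, mul_one, one_mul,
           fmk0, fmk1, fmk2, fmk3, fmk4]
         ring)

lemma sb_MP_zero {j k i : Fin 5} (hjk : k < j) (hij : i ≠ j) (hik : i ≠ k) :
    sb j k (MP i) = 0 := by
  have hdvd : (X j - X k : MvPolynomial (Fin 5) ℚ) ∣ dP i := by
    rw [dP_expand i]
    have h1 : (if k < j ∧ j ≠ i ∧ k ≠ i then (X j - X k : MvPolynomial (Fin 5) ℚ) else 1)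
        ∣ ∏ b : Fin 5, (if b < j ∧ j ≠ i ∧ b ≠ i then X j - X b else 1) :=
      Finset.dvd_prod_of_mem _ (Finset.mem_univ k)
    rw [if_pos ⟨hjk, Ne.symm hij, Ne.symm hik⟩] at h1
    exact h1.trans (Finset.dvd_prod_of_mem _ (Finset.mem_univ j))
  obtain ⟨c, hc⟩ := hdvd
  rw [MP, hc, map_mul, map_mul, map_mul, sb_XsubX j k (ne_of_gt hjk), zero_mul, mul_zero,
    zero_mul]

lemma sb_MP_neg {j k : Fin 5} (hjk : k < j) : sb j k (MP j) = - sb j k (MP k) := by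
  have hne : j ≠ k := ne_of_gt hjk
  have hn : sb j k (nP j) = sb j k (nP k) := by
    rw [nP, nP, map_sub, map_sub, map_pow, map_pow, map_mul, map_mul,
      sb_esymP hne 1, sb_esymP hne 2, sb_esymP hne 3]
  have hs := sb_dP_sign hjk
  have h1 : sb j k ((-1 : MvPolynomial (Fin 5) ℚ)^(j:ℕ)) = (-1)^(j:ℕ) := by
    rw [map_pow, map_neg, map_one]
  have h1' : sb j k ((-1 : MvPolynomial (Fin 5) ℚ)^(k:ℕ)) = (-1)^(k:ℕ) := by
    rw [map_pow, map_neg, map_one]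
  rw [MP, MP, map_mul, map_mul, map_mul, map_mul, hn, h1, h1']
  linear_combination sb j k (nP k) * hs

lemma sb_T_zero {j k : Fin 5} (hjk : k < j) (S80 S90 : MvPolynomial (Fin 5) ℚ) (m n : ℕ) :
    sb j k (∑ i, MP i * (X i)^m * (S80 * (X i)^5 - S90 * (X i)^4)^n) = 0 := by
  have hne : j ≠ k := ne_of_gt hjk
  rw [map_sum]
  have hterm : ∀ i : Fin 5, sb j k (MP i * (X i)^m * (S80 * (X i)^5 - S90 * (X i)^4)^n)
      = sb j k (MP i) * (sb j k (X i))^m *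
        (sb j k S80 * (sb j k (X i))^5 - sb j k S90 * (sb j k (X i))^4)^n := by
    intro i
    rw [map_mul, map_mul, map_pow, map_pow, map_sub, map_mul, map_mul, map_pow, map_pow]
  rw [Finset.sum_congr rfl fun i _ => hterm i]
  rw [← Finset.sum_subset (Finset.subset_univ ({j, k} : Finset (Fin 5)))
      (fun i _ hi => by
        simp only [Finset.mem_insert, Finset.mem_singleton, not_or] at hi
        rw [sb_MP_zero hjk hi.1 hi.2, zero_mul, zero_mul])]
  rw [Finset.sum_pair hne]
  have hxj : sb j k (X j) = X k := by rw [sb_X, if_pos rfl]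
  have hxk : sb j k (X k) = X k := by rw [sb_X, if_neg (Ne.symm hne)]
  rw [hxj, hxk, sb_MP_neg hjk]
  ring

/-- With `l_i = S₈₀ u_i⁵ - S₉₀ u_i⁴` (where `δ·S₈₀ = Σ M_i u_i⁸`, `δ·S₉₀ = Σ M_i u_i⁹`),
each sum `T_{mn} = Σ_i M_i u_i^m l_i^n` is divisible by the discriminant `δ` in
`ℚ[u₀,…,u₄]`. -/
theorem delta_dvd_Tmn (S80 S90 : MvPolynomial (Fin 5) ℚ)
    (hS80 : deltaP * S80 = ∑ i, MP i * (X i)^8)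
    (hS90 : deltaP * S90 = ∑ i, MP i * (X i)^9) (m n : ℕ) :
    deltaP ∣ ∑ i, MP i * (X i)^m * (S80 * (X i)^5 - S90 * (X i)^4)^n := by
  rw [deltaP]
  refine prod_dvd_aux _ (fun p : Fin 5 × Fin 5 => X p.1 - X p.2) _ ?_ ?_ ?_
  · intro p hp
    rw [Finset.mem_filter] at hp
    exact prime_XsubX (ne_of_gt hp.2)
  · intro p hp q hq hpq
    rw [Finset.mem_filter] at hp hq
    exact not_dvd_pairs hp.2 hq.2 hpq
  · intro p hp
    rw [Finset.mem_filter] at hp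
    exact dvd_of_sb_eq_zero (sb_T_zero hp.2 S80 S90 m n)
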